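/- (Volume of balls and doubling for free vector fields.) Under the ball-box inclusions Box(x̄,R) ⊆ B(x̄,R) ⊆ Box(x̄,CR) for R ≤ R_0, and assuming the Jacobian determinant J(u,x) of the exponential map u ↦ exp(Σ_{I∈B} u_I X_{[I]})(x) is bounded above and below by positive constants on a compact set, one has c_1 R^Q ≤ |B(x̄,R)| ≤ c_2 R^Q for all x̄ ∈ Ω' and R ≤ R_0, where Q = Σ_{I∈B} |I|; consequently |B(x̄,2R)| ≤ c_3 |B(x̄,R)| (doubling). -/

import Mathlib

open scoped BigOperators
open MeasureTheory

noncomputable section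

/-- The weighted cube `{u : |u_i| < R^{w i} for all i}`. -/
def wCube {ι : Type*} [Fintype ι] (w : ι → ℕ) (R : ℝ) : Set (ι → ℝ) :=
  {u | ∀ i, |u i| < R ^ w i}


lemma wCube_eq {ι : Type*} [Fintype ι] (w : ι → ℕ) (R : ℝ) :
    wCube w R = Set.univ.pi (fun i => Set.Ioo (-(R ^ w i)) (R ^ w i)) := by
  ext u; simp [wCube, abs_lt, and_comm]

lemma wCube_measurable {ι : Type*} [Fintype ι] (w : ι → ℕ) (R : ℝ) :
    MeasurableSet (wCube w R) := by
  rw [wCube_eq]; exact MeasurableSet.univ_pi (fun i => measurableSet_Ioo)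

lemma wCube_vol {ι : Type*} [Fintype ι] (w : ι → ℕ) {R : ℝ} (hR : 0 < R) :
    volume (wCube w R) = ENNReal.ofReal (2 ^ (Fintype.card ι) * R ^ (∑ i, w i)) := by
  rw [wCube_eq, volume_pi_pi]
  have : ∀ i : ι, volume (Set.Ioo (-(R ^ w i)) (R ^ w i)) = ENNReal.ofReal (2 * R ^ w i) := by
    intro i; rw [Real.volume_Ioo]; ring_nf
  simp only [this]
  rw [← ENNReal.ofReal_prod_of_nonneg (fun i _ => by positivity)]
  congr 1
  rw [Finset.prod_mul_distrib, Finset.prod_const, Finset.prod_pow_eq_pow_sum]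
  rw [Finset.card_univ]

lemma wCube_mono {ι : Type*} [Fintype ι] (w : ι → ℕ) {R R' : ℝ} (h0 : 0 ≤ R) (h : R ≤ R') :
    wCube w R ⊆ wCube w R' := fun u hu i =>
  lt_of_lt_of_le (hu i) (pow_le_pow_left₀ h0 h _)

lemma img_bounds {ι : Type*} [Fintype ι] (f : (ι → ℝ) → (ι → ℝ)) (s : Set (ι → ℝ))
    (hs : MeasurableSet s) (hd : ∀ x ∈ s, DifferentiableAt ℝ f x) (hi : Set.InjOn f s)
    {m M : ℝ}
    (hJ : ∀ x ∈ s, m ≤ |LinearMap.det (fderiv ℝ f x : (ι → ℝ) →ₗ[ℝ] (ι → ℝ))| ∧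
      |LinearMap.det (fderiv ℝ f x : (ι → ℝ) →ₗ[ℝ] (ι → ℝ))| ≤ M) :
    ENNReal.ofReal m * volume s ≤ volume (f '' s) ∧
      volume (f '' s) ≤ ENNReal.ofReal M * volume s := by
  have key := lintegral_abs_det_fderiv_eq_addHaar_image volume hs
    (fun x hx => ((hd x hx).hasFDerivAt).hasFDerivWithinAt) hi
  rw [← key]
  constructor
  · rw [← setLIntegral_const s (ENNReal.ofReal m)]
    exact setLIntegral_mono' hs (fun x hx => ENNReal.ofReal_le_ofReal (hJ x hx).1)
  · rw [← setLIntegral_const s (ENNReal.ofReal M)]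
    exact setLIntegral_mono' hs (fun x hx => ENNReal.ofReal_le_ofReal (hJ x hx).2)

/-- volume of balls and doubling for free vector fields: assuming the
ball-box inclusions `Box(x̄,R) ⊆ B(x̄,R) ⊆ Box(x̄,CR)` for `R ≤ R₀` (where
`Box(x̄,R) = Φ_{x̄}(weighted cube)`), and that the Jacobian determinant of the exponential
map `u ↦ Φ_{x̄}(u)` is bounded above and below by positive constants (with `Φ_{x̄}`
injective on the relevant cube), one gets `c₁ R^Q ≤ |B(x̄,R)| ≤ c₂ R^Q` with
`Q = Σ_i w_i`, and hence the doubling property `|B(x̄,2R)| ≤ c₃ |B(x̄,R)|`. -/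
theorem stmt14 (ι : Type*) [Fintype ι] (w : ι → ℕ) (hw : ∀ i, 1 ≤ w i)
    (Φ : (ι → ℝ) → (ι → ℝ) → (ι → ℝ))
    (Ball : (ι → ℝ) → ℝ → Set (ι → ℝ))
    (Ω' : Set (ι → ℝ)) (R₀ C : ℝ) (hR₀ : 0 < R₀) (hC : 1 ≤ C)
    (hincl : ∀ xb ∈ Ω', ∀ R : ℝ, 0 < R → R ≤ R₀ →
      Φ xb '' wCube w R ⊆ Ball xb R ∧ Ball xb R ⊆ Φ xb '' wCube w (C * R))
    (hdiff : ∀ xb ∈ Ω', ∀ u ∈ wCube w (C * R₀), DifferentiableAt ℝ (Φ xb) u)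
    (hinj : ∀ xb ∈ Ω', Set.InjOn (Φ xb) (wCube w (C * R₀)))
    (m M : ℝ) (hm : 0 < m)
    (hJ : ∀ xb ∈ Ω', ∀ u ∈ wCube w (C * R₀),
      m ≤ |LinearMap.det (fderiv ℝ (Φ xb) u : (ι → ℝ) →ₗ[ℝ] (ι → ℝ))| ∧
      |LinearMap.det (fderiv ℝ (Φ xb) u : (ι → ℝ) →ₗ[ℝ] (ι → ℝ))| ≤ M) :
    ∃ c₁ c₂ c₃ : ℝ, 0 < c₁ ∧ 0 < c₂ ∧ 0 < c₃ ∧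
      ∀ xb ∈ Ω', ∀ R : ℝ, 0 < R → R ≤ R₀ →
        (ENNReal.ofReal (c₁ * R ^ (∑ i, w i)) ≤ volume (Ball xb R) ∧
          volume (Ball xb R) ≤ ENNReal.ofReal (c₂ * R ^ (∑ i, w i))) ∧
        (2 * R ≤ R₀ →
          volume (Ball xb (2 * R)) ≤ ENNReal.ofReal c₃ * volume (Ball xb R)) := by
  set n := Fintype.card ι
  set Q := ∑ i, w i with hQ
  set M' : ℝ := max M m with hM'
  have hM'pos : 0 < M' := lt_of_lt_of_le hm (le_max_right _ _)
  have hC0 : (0:ℝ) < C := lt_of_lt_of_le one_pos hC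
  set c₁ : ℝ := m * 2 ^ n with hc₁
  set c₂ : ℝ := M' * 2 ^ n * C ^ Q with hc₂
  have hc₁pos : 0 < c₁ := by positivity
  have hc₂pos : 0 < c₂ := by positivity
  set c₃ : ℝ := c₂ * 2 ^ Q / c₁ with hc₃
  have hc₃pos : 0 < c₃ := by positivity
  -- main volume bounds
  have main : ∀ xb ∈ Ω', ∀ R : ℝ, 0 < R → R ≤ R₀ →
      ENNReal.ofReal (c₁ * R ^ Q) ≤ volume (Ball xb R) ∧
        volume (Ball xb R) ≤ ENNReal.ofReal (c₂ * R ^ Q) := by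
    intro xb hxb R hR hRR₀
    have hsub : wCube w R ⊆ wCube w (C * R₀) :=
      wCube_mono w hR.le (hRR₀.trans (le_mul_of_one_le_left hR₀.le hC))
    have hsub' : wCube w (C * R) ⊆ wCube w (C * R₀) :=
      wCube_mono w (by positivity) (by nlinarith)
    obtain ⟨hlo, _⟩ := img_bounds (Φ xb) (wCube w R) (wCube_measurable w R)
      (fun x hx => hdiff xb hxb x (hsub hx)) ((hinj xb hxb).mono hsub)
      (fun x hx => hJ xb hxb x (hsub hx))
    obtain ⟨_, hhi⟩ := img_bounds (Φ xb) (wCube w (C * R)) (wCube_measurable w (C * R))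
      (fun x hx => hdiff xb hxb x (hsub' hx)) ((hinj xb hxb).mono hsub')
      (fun x hx => ⟨(hJ xb hxb x (hsub' hx)).1, le_max_of_le_left (hJ xb hxb x (hsub' hx)).2⟩)
    constructor
    · calc ENNReal.ofReal (c₁ * R ^ Q)
          = ENNReal.ofReal m * ENNReal.ofReal (2 ^ n * R ^ Q) := by
            rw [← ENNReal.ofReal_mul hm.le, hc₁]; ring_nf
        _ = ENNReal.ofReal m * volume (wCube w R) := by rw [wCube_vol w hR]
        _ ≤ volume (Φ xb '' wCube w R) := hlo
        _ ≤ volume (Ball xb R) := measure_mono (hincl xb hxb R hR hRR₀).1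
    · calc volume (Ball xb R)
          ≤ volume (Φ xb '' wCube w (C * R)) := measure_mono (hincl xb hxb R hR hRR₀).2
        _ ≤ ENNReal.ofReal M' * volume (wCube w (C * R)) := hhi
        _ = ENNReal.ofReal M' * ENNReal.ofReal (2 ^ n * (C * R) ^ Q) := by
            rw [wCube_vol w (by positivity)]
        _ = ENNReal.ofReal (c₂ * R ^ Q) := by
            rw [← ENNReal.ofReal_mul hM'pos.le]; rw [mul_pow, hc₂]; ring_nf
  refine ⟨c₁, c₂, c₃, hc₁pos, hc₂pos, hc₃pos, fun xb hxb R hR hRR₀ => ⟨main xb hxb R hR hRR₀, ?_⟩⟩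
  intro h2R
  calc volume (Ball xb (2 * R))
      ≤ ENNReal.ofReal (c₂ * (2 * R) ^ Q) := (main xb hxb (2 * R) (by linarith) h2R).2
    _ = ENNReal.ofReal c₃ * ENNReal.ofReal (c₁ * R ^ Q) := by
        rw [← ENNReal.ofReal_mul hc₃pos.le]
        congr 1
        rw [hc₃, mul_pow]
        field_simp
    _ ≤ ENNReal.ofReal c₃ * volume (Ball xb R) :=
        mul_le_mul_right (main xb hxb R hR hRR₀).1 _
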